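/- If the occurrence graph G_{12}(π) of the pattern 12 in a permutation π contains a simple cycle of length k > 4, then G_{12}(π) also contains a cycle of length 3 (a triangle). -/

import Mathlib

open Finset

/-- `s` is an occurrence (index set) of the pattern `p` in the permutation `π`:
`s` has `k` elements and, listed increasingly, `π` on `s` is order isomorphic to `p`. -/
def IsOccurrence {k n : ℕ} (p : Equiv.Perm (Fin k)) (π : Equiv.Perm (Fin n))
    (s : Finset (Fin n)) : Prop :=
  ∃ h : s.card = k, ∀ a b : Fin k,
    π ↑(s.orderIsoOfFin h a) < π ↑(s.orderIsoOfFin h b) ↔ p a < p b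

/-- The occurrence set `V_p(π)` of all occurrence index sets of `p` in `π`. -/
def OccSet {k n : ℕ} (p : Equiv.Perm (Fin k)) (π : Equiv.Perm (Fin n)) :
    Set (Finset (Fin n)) :=
  {s | IsOccurrence p π s}

/-- The occurrence graph `G_p(π)`: vertices are the occurrences of `p` in `π`,
two occurrences adjacent iff they differ in exactly one element. -/
def OccGraph {k n : ℕ} (p : Equiv.Perm (Fin k)) (π : Equiv.Perm (Fin n)) :
    SimpleGraph {s : Finset (Fin n) // IsOccurrence p π s} where
  Adj u v := (u.val \ v.val).card = 1 ∧ (v.val \ u.val).card = 1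
  symm := ⟨fun u v h => ⟨h.2, h.1⟩⟩
  loopless := ⟨fun u h => by simp at h⟩

/-- The graph `G` has a simple cycle of length `k`. -/
def HasCycleLength {V : Type} (G : SimpleGraph V) (k : ℕ) : Prop :=
  ∃ (u : V) (w : G.Walk u u), w.IsCycle ∧ w.length = k

/-! ### Auxiliary definitions and lemmas -/

/-- `a` is below `b` in both position and value. -/
def Cmp {n : ℕ} (π : Equiv.Perm (Fin n)) (a b : Fin n) : Prop :=
  a < b ∧ π a < π b

/-- `a` and `b` are comparable. -/
def CmpS {n : ℕ} (π : Equiv.Perm (Fin n)) (a b : Fin n) : Prop :=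
  Cmp π a b ∨ Cmp π b a

lemma cmp_trans {n : ℕ} {π : Equiv.Perm (Fin n)} {a b c : Fin n}
    (h1 : Cmp π a b) (h2 : Cmp π b c) : Cmp π a c :=
  ⟨h1.1.trans h2.1, h1.2.trans h2.2⟩

lemma cmp_not_both {n : ℕ} {π : Equiv.Perm (Fin n)} {a b : Fin n}
    (h1 : Cmp π a b) (h2 : Cmp π b a) : False :=
  absurd h1.1 (asymm h2.1)

/-- Characterization of occurrences of the pattern `12`. -/
lemma occ_iff {n : ℕ} (π : Equiv.Perm (Fin n)) (s : Finset (Fin n)) :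
    IsOccurrence (Equiv.refl (Fin 2)) π s ↔ ∃ a b, Cmp π a b ∧ s = {a, b} := by
  constructor
  · rintro ⟨hcard, hiso⟩
    set e := s.orderIsoOfFin hcard with he
    have h01 : (0 : Fin 2) < 1 := by decide
    have hlt : (↑(e 0) : Fin n) < ↑(e 1) := by
      exact_mod_cast e.strictMono h01
    have hπ : π ↑(e 0) < π ↑(e 1) := (hiso 0 1).2 (by simpa using h01)
    refine ⟨↑(e 0), ↑(e 1), ⟨hlt, hπ⟩, ?_⟩
    have hsub : ({(↑(e 0) : Fin n), ↑(e 1)} : Finset (Fin n)) ⊆ s := by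
      intro z hz
      rcases Finset.mem_insert.1 hz with h | h
      · exact h ▸ (e 0).2
      · exact (Finset.mem_singleton.1 h) ▸ (e 1).2
    have hcardp : ({(↑(e 0) : Fin n), ↑(e 1)} : Finset (Fin n)).card = 2 :=
      Finset.card_pair (ne_of_lt hlt)
    exact (Finset.eq_of_subset_of_card_le hsub (by rw [hcardp, hcard])).symm
  · rintro ⟨a, b, ⟨hab, hπab⟩, rfl⟩
    have hne : a ≠ b := ne_of_lt hab
    have hcard : ({a, b} : Finset (Fin n)).card = 2 := Finset.card_pair hne
    refine ⟨hcard, ?_⟩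
    set e := ({a, b} : Finset (Fin n)).orderIsoOfFin hcard with he
    have h01 : (0 : Fin 2) < 1 := by decide
    have hlt : (↑(e 0) : Fin n) < ↑(e 1) := by exact_mod_cast e.strictMono h01
    have hm0 : (↑(e 0) : Fin n) ∈ ({a, b} : Finset (Fin n)) := (e 0).2
    have hm1 : (↑(e 1) : Fin n) ∈ ({a, b} : Finset (Fin n)) := (e 1).2
    simp only [Finset.mem_insert, Finset.mem_singleton] at hm0 hm1
    have he0 : (↑(e 0) : Fin n) = a := by
      rcases hm0 with h | h
      · exact h
      · exfalso
        rw [h] at hlt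
        rcases hm1 with h' | h' <;> rw [h'] at hlt
        · exact absurd hlt (asymm hab)
        · exact lt_irrefl b hlt
    have he1 : (↑(e 1) : Fin n) = b := by
      rcases hm1 with h' | h'
      · exfalso
        rw [he0, h'] at hlt
        exact lt_irrefl a hlt
      · exact h'
    intro a' b'
    fin_cases a' <;> fin_cases b' <;>
      simp [he0, he1, hπab, lt_irrefl, asymm hπab, Fin.lt_def]

lemma occ_card {n : ℕ} {π : Equiv.Perm (Fin n)} {s : Finset (Fin n)}
    (h : IsOccurrence (Equiv.refl (Fin 2)) π s) : s.card = 2 := by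
  obtain ⟨a, b, hab, rfl⟩ := (occ_iff π s).1 h
  exact Finset.card_pair (ne_of_lt hab.1)

lemma occ_cmpS {n : ℕ} {π : Equiv.Perm (Fin n)} {s : Finset (Fin n)}
    (h : IsOccurrence (Equiv.refl (Fin 2)) π s) {z1 z2 : Fin n}
    (h1 : z1 ∈ s) (h2 : z2 ∈ s) (hne : z1 ≠ z2) : CmpS π z1 z2 := by
  obtain ⟨a, b, hab, rfl⟩ := (occ_iff π s).1 h
  simp only [Finset.mem_insert, Finset.mem_singleton] at h1 h2
  rcases h1 with rfl | rfl <;> rcases h2 with rfl | rfl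
  · exact absurd rfl hne
  · exact Or.inl hab
  · exact Or.inr hab
  · exact absurd rfl hne

lemma adj_of_shared {n : ℕ} {π : Equiv.Perm (Fin n)}
    {u v : {s : Finset (Fin n) // IsOccurrence (Equiv.refl (Fin 2)) π s}}
    (hne : u ≠ v) {z : Fin n} (hz1 : z ∈ u.1) (hz2 : z ∈ v.1) :
    (OccGraph (Equiv.refl (Fin 2)) π).Adj u v := by
  have cu : u.1.card = 2 := occ_card u.2
  have cv : v.1.card = 2 := occ_card v.2
  have hval : u.1 ≠ v.1 := fun h => hne (Subtype.ext h)
  have key : ∀ (s t : Finset (Fin n)), s.card = 2 → t.card = 2 → s ≠ t →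
      z ∈ s → z ∈ t → (s \ t).card = 1 := by
    intro s t hs ht hst hzs hzt
    have h1 : 1 ≤ (s ∩ t).card :=
      Finset.card_pos.2 ⟨z, Finset.mem_inter.2 ⟨hzs, hzt⟩⟩
    have h2 : (s ∩ t).card ≤ 2 := hs ▸ Finset.card_le_card (Finset.inter_subset_left)
    have h3 : (s ∩ t).card ≠ 2 := by
      intro h
      have : s ∩ t = s := Finset.eq_of_subset_of_card_le Finset.inter_subset_left (by omega)
      have hsub : s ⊆ t := this ▸ Finset.inter_subset_right
      exact hst (Finset.eq_of_subset_of_card_le hsub (by omega))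
    have h4 := Finset.card_sdiff_add_card_inter s t
    omega
  exact ⟨key u.1 v.1 cu cv hval hz1 hz2, key v.1 u.1 cv cu (Ne.symm hval) hz2 hz1⟩

lemma adj_shared {n : ℕ} {π : Equiv.Perm (Fin n)}
    {u v : {s : Finset (Fin n) // IsOccurrence (Equiv.refl (Fin 2)) π s}}
    (h : (OccGraph (Equiv.refl (Fin 2)) π).Adj u v) :
    (u.1 ∩ v.1).card = 1 := by
  have cu : u.1.card = 2 := occ_card u.2
  have h4 := Finset.card_sdiff_add_card_inter u.1 v.1
  have := h.1
  omega

lemma triangle_of {V : Type} {G : SimpleGraph V} {a b c : V}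
    (hab : G.Adj a b) (hbc : G.Adj b c) (hca : G.Adj c a) :
    HasCycleLength G 3 := by
  have hab' : a ≠ b := hab.ne
  have hbc' : b ≠ c := hbc.ne
  have hca' : c ≠ a := hca.ne
  refine ⟨a, .cons hab (.cons hbc (.cons hca .nil)), ?_, rfl⟩
  rw [SimpleGraph.Walk.isCycle_def]
  refine ⟨⟨?_⟩, by simp, ?_⟩
  · simp only [SimpleGraph.Walk.edges_cons, SimpleGraph.Walk.edges_nil,
      List.nodup_cons, List.mem_cons, List.not_mem_nil, or_false, List.nodup_nil, and_true,
      List.mem_singleton, List.not_mem_nil]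
    constructor
    · rintro (h | h) <;> rw [Sym2.eq_iff] at h <;> tauto
    · constructor
      · intro h; rw [Sym2.eq_iff] at h; tauto
      · simp
  · simp only [SimpleGraph.Walk.support_cons, SimpleGraph.Walk.support_nil, List.tail_cons]
    simp [hbc', hca', Ne.symm hca', hab', Ne.symm hab', Ne.symm hbc']

lemma addmod_inj {k j a b : ℕ} (ha : a < k) (hb : b < k)
    (h : (j + a) % k = (j + b) % k) : a = b := by
  have h2 : a ≡ b [MOD k] := Nat.ModEq.add_left_cancel' j h
  rwa [Nat.ModEq, Nat.mod_eq_of_lt ha, Nat.mod_eq_of_lt hb] at h2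

lemma cmp_congr {n : ℕ} {π : Equiv.Perm (Fin n)} {y : ℕ → Fin n} {a b a' b' : ℕ}
    (h : Cmp π (y a) (y b)) (ha : a = a') (hb : b = b') : Cmp π (y a') (y b') :=
  ha ▸ hb ▸ h

lemma addmod_ne {k j a b : ℕ} (ha : a < k) (hb : b < k) (hne : a ≠ b) :
    (j + a) % k ≠ (j + b) % k := fun h => hne (addmod_inj ha hb h)

lemma mod_ne_addmod {k i a : ℕ} (ha0 : 0 < a) (ha : a < k) : i % k ≠ (i + a) % k := by
  intro h
  have h2 : (i + 0) % k = (i + a) % k := by simpa using h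
  have := addmod_inj (Nat.lt_of_le_of_lt (Nat.zero_le _) ha) ha h2
  omega

lemma getVert_eq_support_getElem {V : Type} {G : SimpleGraph V} {u v : V}
    (w : G.Walk u v) (i : ℕ) (h : i < w.support.length) :
    w.getVert i = w.support[i] := by
  induction w generalizing i with
  | nil =>
    simp only [SimpleGraph.Walk.support_nil, List.length_cons, List.length_nil] at h
    have hi : i = 0 := by omega
    subst hi
    simp [SimpleGraph.Walk.getVert]
  | cons hadj p ih =>
    cases i with
    | zero => simp
    | succ i =>
      rw [SimpleGraph.Walk.getVert_cons_succ]
      simp only [SimpleGraph.Walk.support_cons, List.getElem_cons_succ]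
      exact ih i (by simpa using h)

lemma cycle_getVert_inj {V : Type} {G : SimpleGraph V} {u : V} {w : G.Walk u u}
    (hc : w.IsCycle) {i j : ℕ} (hi : i < w.length) (hj : j < w.length)
    (h : w.getVert i = w.getVert j) : i = j := by
  have hnd : w.support.tail.Nodup := hc.2
  have hslen : w.support.length = w.length + 1 := SimpleGraph.Walk.length_support w
  have htlen : w.support.tail.length = w.length := by
    rw [List.length_tail, hslen]; omega
  have hcons : w.support = u :: w.support.tail := w.support_eq_cons
  have key : ∀ t (ht1 : 0 < t) (ht2 : t ≤ w.length),
      w.getVert t = w.support.tail[t-1]'(by omega) := by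
    intro t ht1 ht2
    rw [getVert_eq_support_getElem w t (by omega)]
    obtain ⟨t', rfl⟩ : ∃ t', t = t' + 1 := ⟨t - 1, by omega⟩
    rw [List.getElem_of_eq hcons (by omega)]
    simp
  have huniq : ∀ s t, 0 < s → s ≤ w.length → 0 < t → t ≤ w.length →
      w.getVert s = w.getVert t → s = t := by
    intro s t hs1 hs2 ht1 ht2 hst
    rw [key s hs1 hs2, key t ht1 ht2] at hst
    have := (List.Nodup.getElem_inj_iff hnd).1 hst
    omega
  rcases Nat.eq_zero_or_pos i with rfl | hi0
  · rcases Nat.eq_zero_or_pos j with rfl | hj0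
    · rfl
    · exfalso
      have h0 : w.getVert w.length = w.getVert j := by
        rw [SimpleGraph.Walk.getVert_length]
        rw [SimpleGraph.Walk.getVert_zero] at h
        exact h
      have := huniq w.length j (by omega) le_rfl hj0 (by omega) h0
      omega
  · rcases Nat.eq_zero_or_pos j with rfl | hj0
    · exfalso
      have h0 : w.getVert i = w.getVert w.length := by
        rw [SimpleGraph.Walk.getVert_length]
        rw [SimpleGraph.Walk.getVert_zero] at h
        exact h
      have := huniq i w.length hi0 (by omega) (by omega) le_rfl h0
      omega
    · exact huniq i j hi0 (by omega) hj0 (by omega) h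

/-- Core contradiction in the even case: an induced cycle of even length `≥ 6`
with "low" vertices at even indices is impossible. -/
lemma even_core {n k m : ℕ} (π : Equiv.Perm (Fin n)) (hm : 3 ≤ m) (hk : k = 2*m)
    (y : ℕ → Fin n)
    (hper : ∀ i, y (i + k) = y i)
    (hinj : ∀ i j, y i = y j → i % k = j % k)
    (hD2 : ∀ i j, ¬ (i % k = j % k) → ¬ ((i+1) % k = j % k) → ¬ (i % k = (j+1) % k) →
      ¬ CmpS π (y i) (y j))
    (hH : ∀ i, Cmp π (y (2*i)) (y (2*i+1)) ∧ Cmp π (y (2*i+2)) (y (2*i+1))) : False := by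
  have hk6 : 6 ≤ k := by omega
  have hperT : ∀ t i, y (i + t * k) = y i := by
    intro t
    induction t with
    | zero => intro i; simp
    | succ t ih =>
      intro i
      have e : i + (t+1) * k = (i + t * k) + k := by ring
      rw [e, hper, ih]
  have hlow2 : ∀ q r, y (2*(m*q + r)) = y (2*r) := by
    intro q r
    have e : 2*(m*q + r) = 2*r + q*k := by rw [hk]; ring
    rw [e, hperT]
  obtain ⟨i₀, hi₀m, hmax⟩ := Finset.exists_max_image (Finset.range m) (fun i => y (2*i))
    ⟨0, Finset.mem_range.2 (by omega)⟩
  have hmax' : ∀ i : ℕ, y (2*i) ≤ y (2*i₀) := by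
    intro i
    have e : y (2*i) = y (2*(i % m)) := by
      have e2 : i = m * (i / m) + i % m := (Nat.div_add_mod i m).symm
      calc y (2*i) = y (2*(m * (i / m) + i % m)) := by rw [← e2]
        _ = y (2*(i % m)) := hlow2 _ _
    rw [e]
    exact hmax (i % m) (Finset.mem_range.2 (Nat.mod_lt _ (by omega)))
  set j := 2*i₀ with hj
  set b := i₀ + (m - 1) with hb
  have h2b : 2*b = j + (k-2) := by omega
  have h2b1 : 2*b + 1 = j + (k-1) := by omega
  have h2b2 : 2*b + 2 = j + k := by omega
  have A1 : Cmp π (y j) (y (j+1)) := (hH i₀).1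
  have A2 : Cmp π (y (j+2)) (y (j+1)) := by
    have h0 := (hH i₀).2
    have e : 2*i₀ + 2 = j + 2 := by omega
    rwa [e] at h0
  have A3 : Cmp π (y (2*b)) (y (2*b+1)) := (hH b).1
  have A4 : Cmp π (y j) (y (2*b+1)) := by
    have h0 := (hH b).2
    rwa [h2b2, hper] at h0
  have hpj2 : y (j+2) ≤ y j := by
    have e : j + 2 = 2*(i₀+1) := by omega
    rw [e]
    exact hmax' (i₀+1)
  have hp2b : y (2*b) ≤ y j := by rw [show 2*b = 2*b from rfl]; exact hmax' b
  -- incomparability: the high `y (j+1)` vs the low `y (2*b)`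
  have hwq : ¬ CmpS π (y (j+1)) (y (2*b)) := by
    rw [h2b]
    apply hD2
    · exact addmod_ne (by omega) (by omega) (by omega)
    · have e : j+1+1 = j+2 := by omega
      rw [e]
      exact addmod_ne (by omega) (by omega) (by omega)
    · have e : j+(k-2)+1 = j+(k-1) := by omega
      rw [e]
      exact addmod_ne (by omega) (by omega) (by omega)
  -- incomparability: the high `y (2*b+1)` vs the low `y (j+2)`
  have hup : ¬ CmpS π (y (2*b+1)) (y (j+2)) := by
    rw [h2b1]
    apply hD2
    · exact addmod_ne (by omega) (by omega) (by omega)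
    · have e : j+(k-1)+1 = j + k := by omega
      rw [e, Nat.add_mod_right]
      have e2 : j % k = (j+0) % k := by rw [Nat.add_zero]
      rw [e2]
      exact addmod_ne (by omega) (by omega) (by omega)
    · have e : j+2+1 = j+3 := by omega
      rw [e]
      exact addmod_ne (by omega) (by omega) (by omega)
  have hne_y : ∀ p q : ℕ, p % k ≠ q % k → y p ≠ y q := fun p q hpq h => hpq (hinj _ _ h)
  have hπwq : π (y (j+1)) < π (y (2*b)) := by
    have hpos : y (2*b) < y (j+1) := lt_of_le_of_lt hp2b A1.1
    have hle : ¬ (π (y (2*b)) < π (y (j+1))) := fun hlt => hwq (Or.inr ⟨hpos, hlt⟩)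
    have hne' : π (y (j+1)) ≠ π (y (2*b)) := by
      intro he
      refine hne_y (j+1) (2*b) ?_ (π.injective he)
      rw [h2b]
      exact addmod_ne (by omega) (by omega) (by omega)
    exact lt_of_le_of_ne (not_lt.1 hle) hne'
  have hπup : π (y (2*b+1)) < π (y (j+2)) := by
    have hpos : y (j+2) < y (2*b+1) := lt_of_le_of_lt hpj2 A4.1
    have hle : ¬ (π (y (j+2)) < π (y (2*b+1))) := fun hlt => hup (Or.inr ⟨hpos, hlt⟩)
    have hne' : π (y (2*b+1)) ≠ π (y (j+2)) := by
      intro he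
      refine hne_y (2*b+1) (j+2) ?_ (π.injective he)
      rw [h2b1]
      exact addmod_ne (by omega) (by omega) (by omega)
    exact lt_of_le_of_ne (not_lt.1 hle) hne'
  -- the cyclic chain of strict inequalities
  have chain : π (y (j+1)) < π (y (j+1)) :=
    hπwq.trans (A3.2.trans (hπup.trans A2.2))
  exact lt_irrefl _ chain

/-- No induced cycle of length `k ≥ 5` in the comparability relation. -/
lemma no_induced_cycle {n k : ℕ} (π : Equiv.Perm (Fin n)) (hk : 5 ≤ k)
    (y : ℕ → Fin n)
    (hper : ∀ i, y (i + k) = y i)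
    (hinj : ∀ i j, y i = y j → i % k = j % k)
    (hD2 : ∀ i j, ¬ (i % k = j % k) → ¬ ((i+1) % k = j % k) → ¬ (i % k = (j+1) % k) →
      ¬ CmpS π (y i) (y j))
    (hD1 : ∀ i, CmpS π (y i) (y (i+1))) : False := by
  have hk0 : 0 < k := by omega
  -- alternation of edge directions
  have step : ∀ i, Cmp π (y i) (y (i+1)) → Cmp π (y (i+2)) (y (i+1)) := by
    intro i h1
    rcases hD1 (i+1) with h2 | h2
    · exfalso
      have h3 : Cmp π (y i) (y (i+2)) := cmp_trans h1 h2
      refine hD2 i (i+2) ?_ ?_ ?_ (Or.inl h3)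
      · exact mod_ne_addmod (by omega) (by omega)
      · exact addmod_ne (by omega) (by omega) (by omega)
      · have e : i+2+1 = i+3 := by omega
        rw [e]
        exact mod_ne_addmod (by omega) (by omega)
    · exact h2
  have step' : ∀ i, Cmp π (y (i+1)) (y i) → Cmp π (y (i+1)) (y (i+2)) := by
    intro i h1
    rcases hD1 (i+1) with h2 | h2
    · exact h2
    · exfalso
      have h3 : Cmp π (y (i+2)) (y i) := cmp_trans h2 h1
      refine hD2 i (i+2) ?_ ?_ ?_ (Or.inr h3)
      · exact mod_ne_addmod (by omega) (by omega)
      · exact addmod_ne (by omega) (by omega) (by omega)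
      · have e : i+2+1 = i+3 := by omega
        rw [e]
        exact mod_ne_addmod (by omega) (by omega)
  have up2 : ∀ i, Cmp π (y i) (y (i+1)) → Cmp π (y (i+2)) (y (i+3)) := by
    intro i h1
    exact step' (i+1) (step i h1)
  have down2 : ∀ i, Cmp π (y (i+1)) (y i) → Cmp π (y (i+3)) (y (i+2)) := by
    intro i h1
    exact step (i+1) (step' i h1)
  have upIter : ∀ t i, Cmp π (y i) (y (i+1)) → Cmp π (y (i+2*t)) (y (i+2*t+1)) := by
    intro t
    induction t with
    | zero => intro i h1; simpa using h1
    | succ t ih =>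
      intro i h1
      have h2 := up2 (i+2*t) (ih i h1)
      have e1 : i+2*t+2 = i+2*(t+1) := by ring
      have e2 : i+2*t+3 = i+2*(t+1)+1 := by ring
      rwa [e1, e2] at h2
  have downIter : ∀ t i, Cmp π (y (i+1)) (y i) → Cmp π (y (i+2*t+1)) (y (i+2*t)) := by
    intro t
    induction t with
    | zero => intro i h1; simpa using h1
    | succ t ih =>
      intro i h1
      have h2 := down2 (i+2*t) (ih i h1)
      have e1 : i+2*t+2 = i+2*(t+1) := by ring
      have e2 : i+2*t+3 = i+2*(t+1)+1 := by ring
      rwa [e1, e2] at h2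
  rcases Nat.even_or_odd k with he | ho
  · -- even case: `k = 2*m` with `m ≥ 3`
    obtain ⟨m, hm⟩ := he
    have hk2 : k = 2*m := by omega
    have hm3 : 3 ≤ m := by omega
    rcases hD1 0 with h0 | h0
    · refine even_core π hm3 hk2 y hper hinj hD2 ?_
      intro i
      constructor
      · have h1 := upIter i 0 h0
        simpa using h1
      · have hd1 : Cmp π (y (1+1)) (y 1) := step 0 h0
        have h1 := downIter i 1 hd1
        have e1 : 1+2*i+1 = 2*i+2 := by omega
        have e2 : 1+2*i = 2*i+1 := by omega
        rwa [e1, e2] at h1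
    · -- shift everything by one
      refine even_core π hm3 hk2 (fun i => y (i+1)) ?_ ?_ ?_ ?_
      · intro i
        show y (i+k+1) = y (i+1)
        have e : i+k+1 = (i+1)+k := by omega
        rw [e, hper]
      · intro i i' hii'
        have h1 := hinj (i+1) (i'+1) hii'
        exact Nat.ModEq.add_right_cancel' 1 h1
      · intro i i' c1 c2 c3
        refine hD2 (i+1) (i'+1) ?_ ?_ ?_
        · exact fun hcon => c1 (Nat.ModEq.add_right_cancel' 1 hcon)
        · exact fun hcon => c2 (Nat.ModEq.add_right_cancel' 1 hcon)
        · exact fun hcon => c3 (Nat.ModEq.add_right_cancel' 1 hcon)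
      · intro i
        have hu1 : Cmp π (y 1) (y (1+1)) := step' 0 h0
        constructor
        · show Cmp π (y (2*i+1)) (y (2*i+1+1))
          exact cmp_congr (upIter i 1 hu1) (by omega) (by omega)
        · show Cmp π (y (2*i+2+1)) (y (2*i+1+1))
          have hd2 : Cmp π (y (2+1)) (y 2) := step 1 hu1
          have h1 := downIter i 2 hd2
          have e1 : 2+2*i+1 = 2*i+2+1 := by omega
          have e2 : 2+2*i = 2*i+1+1 := by omega
          rwa [e1, e2] at h1
  · -- odd case: impossible by parity of the alternation
    obtain ⟨t, ht⟩ := ho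
    have hyk : y k = y 0 := by simpa using hper 0
    have hyk1 : y (k+1) = y 1 := by
      have e : k+1 = 1+k := by omega
      rw [e, hper]
    rcases hD1 0 with h0 | h0
    · have hUk : Cmp π (y k) (y (k+1)) := by rw [hyk, hyk1]; exact h0
      have hDk : Cmp π (y (k+1)) (y k) := by
        have hd1 : Cmp π (y (1+1)) (y 1) := step 0 h0
        have h1 := downIter t 1 hd1
        have e1 : 1+2*t+1 = k+1 := by omega
        have e2 : 1+2*t = k := by omega
        rwa [e1, e2] at h1
      exact cmp_not_both hUk hDk
    · have hDk : Cmp π (y (k+1)) (y k) := by rw [hyk, hyk1]; exact h0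
      have hUk : Cmp π (y k) (y (k+1)) := by
        have hu1 : Cmp π (y 1) (y (1+1)) := step' 0 h0
        exact cmp_congr (upIter t 1 hu1) (by omega) (by omega)
      exact cmp_not_both hUk hDk

theorem cycle_gt_four_gives_triangle (n k : ℕ) (π : Equiv.Perm (Fin n)) (hk : 4 < k)
    (h : HasCycleLength (OccGraph (Equiv.refl (Fin 2)) π) k) :
    HasCycleLength (OccGraph (Equiv.refl (Fin 2)) π) 3 := by
  classical
  by_cases hT : HasCycleLength (OccGraph (Equiv.refl (Fin 2)) π) 3
  · exact hT
  exfalso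
  obtain ⟨u, w, hc, hl⟩ := h
  have hk0 : 0 < k := by omega
  set V' : ℕ → {s : Finset (Fin n) // IsOccurrence (Equiv.refl (Fin 2)) π s} :=
    fun i => w.getVert (i % k) with hV'
  have hVper : ∀ i, V' (i + k) = V' i := by
    intro i
    simp only [hV', Nat.add_mod_right]
  have hadj : ∀ i, (OccGraph (Equiv.refl (Fin 2)) π).Adj (V' i) (V' (i+1)) := by
    intro i
    have hr : i % k < k := Nat.mod_lt _ hk0
    have h1k : 1 % k = 1 := Nat.mod_eq_of_lt (by omega)
    rcases Nat.lt_or_ge (i % k + 1) k with hlt | hge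
    · have e : (i+1) % k = i % k + 1 := by
        rw [Nat.add_mod, h1k, Nat.mod_eq_of_lt hlt]
      show (OccGraph (Equiv.refl (Fin 2)) π).Adj (w.getVert (i % k)) (w.getVert ((i+1) % k))
      rw [e]
      exact w.adj_getVert_succ (by omega)
    · have e0 : i % k = k - 1 := by omega
      have e : (i+1) % k = 0 := by
        rw [Nat.add_mod, h1k, e0]
        have e2 : k - 1 + 1 = k := by omega
        rw [e2, Nat.mod_self]
      show (OccGraph (Equiv.refl (Fin 2)) π).Adj (w.getVert (i % k)) (w.getVert ((i+1) % k))
      rw [e, e0]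
      have h1 := w.adj_getVert_succ (i := k-1) (by omega)
      have h2 : w.getVert (k-1+1) = w.getVert 0 := by
        have e2 : k-1+1 = w.length := by omega
        rw [e2, SimpleGraph.Walk.getVert_length, SimpleGraph.Walk.getVert_zero]
      rwa [h2] at h1
  have hVinj : ∀ i j, V' i = V' j → i % k = j % k := by
    intro i j hij
    have hi' : i % k < w.length := by rw [hl]; exact Nat.mod_lt _ hk0
    have hj' : j % k < w.length := by rw [hl]; exact Nat.mod_lt _ hk0
    exact cycle_getVert_inj hc hi' hj' hij
  have h3 : ∀ (z : Fin n) (i j l : ℕ), i % k ≠ j % k → i % k ≠ l % k → j % k ≠ l % k →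
      z ∈ (V' i).1 → z ∈ (V' j).1 → z ∈ (V' l).1 → False := by
    intro z i j l hij hil hjl hzi hzj hzl
    have nij : V' i ≠ V' j := fun h => hij (hVinj _ _ h)
    have nil' : V' i ≠ V' l := fun h => hil (hVinj _ _ h)
    have njl : V' j ≠ V' l := fun h => hjl (hVinj _ _ h)
    exact hT (triangle_of (adj_of_shared nij hzi hzj) (adj_of_shared njl hzj hzl)
      (adj_of_shared nil'.symm hzl hzi))
  have hx : ∀ i, ∃ z, z ∈ (V' i).1 ∧ z ∈ (V' (i+1)).1 := by
    intro i
    have h1 := adj_shared (hadj i)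
    obtain ⟨z, hz⟩ := Finset.card_pos.1 (by omega : 0 < ((V' i).1 ∩ (V' (i+1)).1).card)
    exact ⟨z, Finset.mem_inter.1 hz⟩
  choose x hx1 hx2 using hx
  have hxuniq : ∀ i (z z' : Fin n), z ∈ (V' i).1 → z ∈ (V' (i+1)).1 →
      z' ∈ (V' i).1 → z' ∈ (V' (i+1)).1 → z = z' := by
    intro i z z' m1 m2 m3 m4
    have hcard := adj_shared (hadj i)
    exact Finset.card_le_one.1 (le_of_eq hcard) _ (Finset.mem_inter.2 ⟨m1, m2⟩)
      _ (Finset.mem_inter.2 ⟨m3, m4⟩)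
  have hxper : ∀ i, x (i + k) = x i := by
    intro i
    have m1 : x (i+k) ∈ (V' i).1 := by rw [← hVper i]; exact hx1 (i+k)
    have m2 : x (i+k) ∈ (V' (i+1)).1 := by
      rw [← hVper (i+1)]
      have h1 := hx2 (i+k)
      have e : i+k+1 = (i+1)+k := by omega
      rwa [e] at h1
    exact hxuniq i _ _ m1 m2 (hx1 i) (hx2 i)
  have hxinj : ∀ i j, x i = x j → i % k = j % k := by
    intro i j hij
    by_contra hne
    by_cases hc2 : (i+1) % k = j % k
    · have hij1 : i % k ≠ (j+1) % k := by
        intro hcon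
        have h1 : (i+1+1) % k = (j+1) % k := Nat.ModEq.add_right 1 hc2
        have h2 : (i+1+1) % k = i % k := h1.trans hcon.symm
        have h2' : (i+2) % k = (i+0) % k := by
          have e : i+1+1 = i+2 := by omega
          rw [← e]
          simpa using h2
        have := addmod_inj (show 2 < k by omega) (show 0 < k by omega) h2'
        omega
      have hj1 : j % k ≠ (j+1) % k := mod_ne_addmod (by omega) (by omega)
      refine h3 (x i) i j (j+1) hne hij1 hj1 (hx1 i) ?_ ?_
      · rw [hij]; exact hx1 j
      · rw [hij]; exact hx2 j
    · have hii1 : i % k ≠ (i+1) % k := mod_ne_addmod (by omega) (by omega)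
      refine h3 (x i) i (i+1) j hii1 hne hc2 (hx1 i) (hx2 i) ?_
      rw [hij]; exact hx1 j
  have hxne : ∀ i j, i % k ≠ j % k → x i ≠ x j := fun i j h he => h (hxinj _ _ he)
  have hD1 : ∀ i, CmpS π (x i) (x (i+1)) :=
    fun i => occ_cmpS (V' (i+1)).2 (hx2 i) (hx1 (i+1))
      (hxne i (i+1) (mod_ne_addmod (by omega) (by omega)))
  have hD2 : ∀ i j, ¬ (i % k = j % k) → ¬ ((i+1) % k = j % k) → ¬ (i % k = (j+1) % k) →
      ¬ CmpS π (x i) (x j) := by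
    intro i j c1 c2 c3 hcs
    have hocc : IsOccurrence (Equiv.refl (Fin 2)) π ({x i, x j} : Finset (Fin n)) := by
      rcases hcs with h | h
      · exact (occ_iff π _).2 ⟨x i, x j, h, rfl⟩
      · exact (occ_iff π _).2 ⟨x j, x i, h, Finset.pair_comm _ _⟩
    have hjj1 : j % k ≠ (j+1) % k := mod_ne_addmod (by omega) (by omega)
    by_cases ht1 : ({x i, x j} : Finset (Fin n)) = (V' i).1
    · have hzj : x j ∈ (V' i).1 := ht1 ▸ (Finset.mem_insert_of_mem (Finset.mem_singleton_self _))
      exact h3 (x j) i j (j+1) c1 c3 hjj1 hzj (hx1 j) (hx2 j)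
    by_cases ht2 : ({x i, x j} : Finset (Fin n)) = (V' (i+1)).1
    · have hzj : x j ∈ (V' (i+1)).1 :=
        ht2 ▸ (Finset.mem_insert_of_mem (Finset.mem_singleton_self _))
      have c2' : (i+1) % k ≠ (j+1) % k := by
        intro hcon
        exact c1 (Nat.ModEq.add_right_cancel' 1 hcon)
      exact h3 (x j) (i+1) j (j+1) c2 c2' hjj1 hzj (hx1 j) (hx2 j)
    · have hab : (OccGraph (Equiv.refl (Fin 2)) π).Adj ⟨{x i, x j}, hocc⟩ (V' i) :=
        adj_of_shared (fun h => ht1 (congrArg Subtype.val h))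
          (Finset.mem_insert_self _ _) (hx1 i)
      have hca : (OccGraph (Equiv.refl (Fin 2)) π).Adj (V' (i+1)) ⟨{x i, x j}, hocc⟩ :=
        adj_of_shared (fun h => ht2 (congrArg Subtype.val h).symm)
          (hx2 i) (Finset.mem_insert_self _ _)
      exact hT (triangle_of hab (hadj i) hca)
  exact no_induced_cycle π (by omega) x hxper hxinj hD2 hD1
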